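/- Let D be a triangulated category, Γ a finite rank abelian group, cl : K₀(D) → Γ a group homomorphism, and σ = (Z, P) a Bridgeland stability condition on D with respect to cl (in particular σ satisfies the support property). Suppose the autoequivalence Φ of D is DHKK pseudo-Anosov at σ with stretch factor λ > 1. Then for every σ-semistable object A (i.e., every nonzero A ∈ P(φ) for some φ ∈ ℝ), the limit lim_{n→∞} (1/n)·log |Z(Φⁿ A)| exists and equals log λ; in particular it never equals −log λ. -/

import Mathlib

/-!
STATEMENT 1: If `Φ` is DHKK pseudo-Anosov at a Bridgeland stability condition `σ` with
stretch factor `λ > 1`, then for every `σ`-semistable object `A` (nonzero `A ∈ P(φ)`),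
`lim_{n→∞} (1/n)·log |Z(Φⁿ A)|` exists and equals `log λ`; in particular it never
equals `−log λ`.
-/

open CategoryTheory CategoryTheory.Limits CategoryTheory.Pretriangulated Filter ZeroObject
open scoped ENNReal TensorProduct

noncomputable section

universe v u

variable (C : Type u) [Category.{v} C] [Preadditive C] [HasZeroObject C]
  [HasShift C ℤ] [∀ n : ℤ, (shiftFunctor C n).Additive] [Pretriangulated C] [HasBinaryBiproducts C]
  (Γ : Type*) [AddCommGroup Γ] [Module.Free ℤ Γ] [Module.Finite ℤ Γ] (cl : C → Γ)

/-- A Bridgeland stability condition `σ = (Z, P)` with respect to `cl : K₀(D) → Γ`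
(we encode the homomorphism from `K₀(D)` as a function `cl` on objects which is additive
on distinguished triangles). Fields `phiPlus`, `phiMinus`, `mass` record the phases
`φ⁺_σ, φ⁻_σ` and the mass `m_σ`, computed from Harder--Narasimhan filtrations. -/
structure BridgelandStab where
  /-- The central charge `Z : Γ → ℂ`. -/
  Z : Γ →+ ℂ
  /-- The slicing: strictly full additive subcategories `P(φ)`. -/
  P : ℝ → Set C
  P_iso : ∀ (φ : ℝ) ⦃E F : C⦄, (E ≅ F) → E ∈ P φ → F ∈ P φ
  P_zero_mem : ∀ φ : ℝ, (0 : C) ∈ P φ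
  P_add : ∀ (φ : ℝ) ⦃E F : C⦄, E ∈ P φ → F ∈ P φ → (E ⊞ F) ∈ P φ
  /-- (i) `Z(E) ∈ ℝ_{>0}·exp(iπφ)` for nonzero `E ∈ P(φ)`. -/
  ray : ∀ (φ : ℝ) (E : C), E ∈ P φ → ¬ IsZero E →
    ∃ r : ℝ, 0 < r ∧ Z (cl E) = (r : ℂ) * Complex.exp ((Real.pi * φ : ℝ) * Complex.I)
  /-- (ii) `P(φ+1) = P(φ)[1]`. -/
  shift : ∀ (φ : ℝ) (E : C), E ∈ P (φ + 1) ↔ ∃ F ∈ P φ, Nonempty (E ≅ F⟦(1:ℤ)⟧)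
  /-- (iii) `Hom(A₁, A₂) = 0` for `A_i ∈ P(φ_i)`, `φ₁ > φ₂`. -/
  hom_vanish : ∀ (φ₁ φ₂ : ℝ) (A₁ A₂ : C), φ₂ < φ₁ → A₁ ∈ P φ₁ → A₂ ∈ P φ₂ →
    ∀ f : A₁ ⟶ A₂, f = 0
  phiPlus : C → ℝ
  phiMinus : C → ℝ
  mass : C → ℝ
  mass_zero : ∀ E : C, IsZero E → mass E = 0
  /-- (iv) Harder--Narasimhan filtrations, computing `φ⁺`, `φ⁻` and the mass `m_σ`. -/
  HN : ∀ E : C, ¬ IsZero E → ∃ (n : ℕ) (X : Fin (n + 2) → C) (A : Fin (n + 1) → C)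
      (φ : Fin (n + 1) → ℝ),
    IsZero (X 0) ∧ Nonempty (X (Fin.last (n + 1)) ≅ E) ∧ StrictAnti φ ∧
    (∀ i : Fin (n + 1), ∃ (f : X i.castSucc ⟶ X i.succ) (g : X i.succ ⟶ A i)
      (h : A i ⟶ (X i.castSucc)⟦(1:ℤ)⟧), Triangle.mk f g h ∈ distTriang C) ∧
    (∀ i : Fin (n + 1), A i ∈ P (φ i) ∧ ¬ IsZero (A i)) ∧
    phiPlus E = φ 0 ∧ phiMinus E = φ (Fin.last n) ∧
    mass E = ∑ i : Fin (n + 1), ‖Z (cl (A i))‖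
  /-- (v) the support property, for a norm on `Γ ⊗ ℝ`. -/
  support : ∃ c : ℝ, 0 < c ∧ ∃ ν : (ℝ ⊗[ℤ] Γ) → ℝ,
    (∀ x, 0 ≤ ν x) ∧ (∀ x, ν x = 0 ↔ x = 0) ∧
    (∀ (r : ℝ) (x), ν (r • x) = |r| * ν x) ∧
    (∀ x y, ν (x + y) ≤ ν x + ν y) ∧
    ∀ (φ : ℝ) (E : C), E ∈ P φ → ¬ IsZero E →
      ν ((1 : ℝ) ⊗ₜ[ℤ] (cl E)) ≤ c * ‖Z (cl E)‖

variable {C Γ cl}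

/-- `Φ` is DHKK pseudo-Anosov at `σ` with stretch factor `lam > 1`: there are an increasing
`f : ℝ → ℝ` with `f(φ+1) = f(φ)+1` and `T = diag(1/λ, λ)` or `diag(λ, 1/λ)` (identifying
`ℂ ≅ ℝ²`) with `Z(ΦE) = T(Z(E))` for all `E` and `Φ(P(φ)) = P(f(φ))` for all `φ`. -/
def IsDHKKPseudoAnosov (σ : BridgelandStab C Γ cl) (Φ : C ≌ C) (lam : ℝ) : Prop :=
  1 < lam ∧ ∃ f : ℝ → ℝ, Monotone f ∧ (∀ φ : ℝ, f (φ + 1) = f φ + 1) ∧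
    ((∀ E : C, (σ.Z (cl (Φ.functor.obj E))).re = lam⁻¹ * (σ.Z (cl E)).re ∧
               (σ.Z (cl (Φ.functor.obj E))).im = lam * (σ.Z (cl E)).im) ∨
     (∀ E : C, (σ.Z (cl (Φ.functor.obj E))).re = lam * (σ.Z (cl E)).re ∧
               (σ.Z (cl (Φ.functor.obj E))).im = lam⁻¹ * (σ.Z (cl E)).im)) ∧
    (∀ (φ : ℝ) (E : C), E ∈ σ.P (f φ) ↔ ∃ F ∈ σ.P φ, Nonempty (E ≅ Φ.functor.obj F))

/-- `log` with values in `EReal`, with the convention `log 0 = ⊥`. -/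
def elog (x : ℝ) : EReal := if x = 0 then ⊥ else ((Real.log x : ℝ) : EReal)


private lemma nu_sum_le {α : Type*} [AddCommGroup α] (ν : α → ℝ)
    (hz : ν 0 = 0) (hνa : ∀ x y, ν (x + y) ≤ ν x + ν y) {ι : Type*} (s : Finset ι) (f : ι → α) :
    ν (∑ i ∈ s, f i) ≤ ∑ i ∈ s, ν (f i) := by
  classical
  induction s using Finset.induction with
  | empty => simp [hz]
  | insert _ _ h ih =>
      rw [Finset.sum_insert h, Finset.sum_insert h]
      exact (hνa _ _).trans (by linarith)

private lemma lattice_bound {Γ : Type*} [AddCommGroup Γ] [Module.Free ℤ Γ] [Module.Finite ℤ Γ]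
    (ν : (ℝ ⊗[ℤ] Γ) → ℝ)
    (hν0 : ∀ x, 0 ≤ ν x) (hνz : ∀ x, ν x = 0 ↔ x = 0)
    (hνs : ∀ (r : ℝ) (x), ν (r • x) = |r| * ν x)
    (hνa : ∀ x y, ν (x + y) ≤ ν x + ν y) :
    ∃ ε : ℝ, 0 < ε ∧ ∀ g : Γ, g ≠ 0 → ε ≤ ν ((1:ℝ) ⊗ₜ[ℤ] g) := by
  classical
  have hz : ν 0 = 0 := (hνz 0).mpr rfl
  set ι := Module.Free.ChooseBasisIndex ℤ Γ
  let b : Module.Basis ι ℤ Γ := Module.Free.chooseBasis ℤ Γ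
  by_cases hempty : IsEmpty ι
  · refine ⟨1, one_pos, fun g hg => absurd ?_ hg⟩
    have : b.repr g = 0 := Subsingleton.elim _ _
    simpa using congrArg b.repr.symm this
  rw [not_isEmpty_iff] at hempty
  let B : Module.Basis ι ℝ (ℝ ⊗[ℤ] Γ) := Algebra.TensorProduct.basis ℝ b
  let e := B.equivFun
  set N : (ι → ℝ) → ℝ := fun v => ν (e.symm v) with hN
  have hNsub : ∀ v w, N (v + w) ≤ N v + N w := fun v w => by
    simpa [hN, map_add] using hνa (e.symm v) (e.symm w)
  have hNsmul : ∀ (r : ℝ) (v), N (r • v) = |r| * N v := fun r v => by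
    simp [hN, map_smul, hνs]
  have hN0 : ∀ v, 0 ≤ N v := fun v => hν0 _
  -- upper bound / Lipschitz
  set Cb : ℝ := ∑ i : ι, ν (B i) with hCb
  have hCb0 : 0 ≤ Cb := Finset.sum_nonneg fun i _ => hν0 _
  have hNle : ∀ v, N v ≤ Cb * ‖v‖ := by
    intro v
    have h1 : N v = ν (∑ i : ι, v i • B i) := by
      simp only [hN, e, Module.Basis.equivFun_symm_apply]
    rw [h1]
    refine (nu_sum_le ν hz hνa _ _).trans ?_
    rw [hCb, Finset.sum_mul]
    refine Finset.sum_le_sum fun i _ => ?_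
    rw [hνs]
    rw [mul_comm (ν (B i)) ‖v‖, ← Real.norm_eq_abs]
    exact mul_le_mul_of_nonneg_right (norm_le_pi_norm v i) (hν0 _)
  have hcont : Continuous N := by
    refine (LipschitzWith.of_dist_le_mul (K := Cb.toNNReal) (fun v w => ?_)).continuous
    rw [Real.coe_toNNReal Cb hCb0, Real.dist_eq, dist_eq_norm]
    rw [abs_sub_le_iff]
    constructor
    · have := hNsub (v - w) w
      simp only [sub_add_cancel] at this
      have h2 := hNle (v - w)
      linarith
    · have := hNsub (w - v) v
      simp only [sub_add_cancel] at this
      have h2 := hNle (w - v)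
      rw [← norm_neg, neg_sub] at h2
      linarith
  -- minimum on the sphere
  have hSne : (Metric.sphere (0 : ι → ℝ) 1).Nonempty :=
    NormedSpace.sphere_nonempty.mpr zero_le_one
  obtain ⟨v0, hv0S, hv0min⟩ :=
    (isCompact_sphere (0 : ι → ℝ) 1).exists_isMinOn hSne hcont.continuousOn
  rw [isMinOn_iff] at hv0min
  have hv0 : ‖v0‖ = 1 := by rwa [mem_sphere_zero_iff_norm] at hv0S
  set m : ℝ := N v0 with hm
  have hmpos : 0 < m := by
    rcases (hN0 v0).lt_or_eq with h | h
    · exact h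
    · exfalso
      have : e.symm v0 = 0 := (hνz _).mp h.symm
      have : v0 = 0 := by simpa using congrArg e this
      rw [this] at hv0; simp at hv0
  have key : ∀ v : ι → ℝ, 1 ≤ ‖v‖ → m ≤ N v := by
    intro v hv
    have hvne : ‖v‖ ≠ 0 := by positivity
    have hw : (‖v‖⁻¹ • v) ∈ Metric.sphere (0 : ι → ℝ) 1 := by
      rw [mem_sphere_zero_iff_norm, norm_smul, norm_inv, norm_norm, inv_mul_cancel₀ hvne]
    have h1 := hv0min _ hw
    rw [hNsmul, abs_of_nonneg (by positivity)] at h1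
    calc m ≤ ‖v‖⁻¹ * N v := h1
    _ ≤ 1 * N v := by
        refine mul_le_mul_of_nonneg_right ?_ (hN0 v)
        exact inv_le_one_of_one_le₀ hv
    _ = N v := one_mul _
  refine ⟨m, hmpos, fun g hg => ?_⟩
  set v : ι → ℝ := e ((1:ℝ) ⊗ₜ[ℤ] g) with hv
  have hrepr : ∀ i, v i = ((b.repr g i : ℤ) : ℝ) := by
    intro i
    rw [hv]
    show B.repr ((1:ℝ) ⊗ₜ[ℤ] g) i = _
    rw [Algebra.TensorProduct.basis_repr_tmul]
    simp
  have hgr : b.repr g ≠ 0 := fun h => hg (by simpa using congrArg b.repr.symm h)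
  obtain ⟨i, hi⟩ := Finsupp.ne_iff.mp hgr
  have hvi : 1 ≤ |v i| := by
    rw [hrepr i]
    rw [← Int.cast_abs]
    exact_mod_cast Int.one_le_abs (by simpa using hi)
  have hvn : 1 ≤ ‖v‖ := le_trans hvi (by rw [← Real.norm_eq_abs]; exact norm_le_pi_norm v i)
  have := key v hvn
  simpa only [hN, hv, LinearEquiv.symm_apply_apply] using this


private lemma aux_tendsto (lam x y : ℝ) (hlam : 1 < lam) (hy : y ≠ 0) :
    Tendsto (fun n : ℕ => (n : ℝ)⁻¹ *
      Real.log (Real.sqrt ((lam⁻¹ ^ n * x) ^ 2 + (lam ^ n * y) ^ 2)))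
      atTop (nhds (Real.log lam)) := by
  have hlam0 : 0 < lam := lt_trans one_pos hlam
  have hq0 : 0 < lam⁻¹ := inv_pos.mpr hlam0
  have hq1 : lam⁻¹ < 1 := inv_lt_one_of_one_lt₀ hlam
  set c : ℕ → ℝ := fun n => (lam⁻¹ ^ n) ^ 4 * x ^ 2 + y ^ 2 with hc
  have hcpos : ∀ n, 0 < c n := fun n => by
    have : 0 < y ^ 2 := by positivity
    have h2 : 0 ≤ (lam⁻¹ ^ n) ^ 4 * x ^ 2 := by positivity
    simp only [hc]; linarith
  have hclim : Tendsto c atTop (nhds (y ^ 2)) := by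
    have h1 : Tendsto (fun n : ℕ => (lam⁻¹ ^ n) ^ 4 * x ^ 2) atTop (nhds 0) := by
      have h2 : Tendsto (fun n : ℕ => lam⁻¹ ^ n) atTop (nhds 0) :=
        tendsto_pow_atTop_nhds_zero_of_lt_one (le_of_lt hq0) hq1
      have h3 : Tendsto (fun n : ℕ => (lam⁻¹ ^ n) ^ 4) atTop (nhds 0) := by
        have := (h2.pow 4)
        simpa using this
      simpa using h3.mul_const (x ^ 2)
    have := h1.add_const (y ^ 2)
    simpa only [hc, zero_add] using this
  have hloglim : Tendsto (fun n => Real.log (c n)) atTop (nhds (Real.log (y ^ 2))) :=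
    ((Real.continuousAt_log (by positivity)).tendsto).comp hclim
  have hmain : Tendsto (fun n : ℕ => Real.log lam + (n : ℝ)⁻¹ * ((1/2) * Real.log (c n)))
      atTop (nhds (Real.log lam)) := by
    have h0 : Tendsto (fun n : ℕ => (n : ℝ)⁻¹ * ((1/2) * Real.log (c n))) atTop (nhds 0) := by
      have := tendsto_inv_atTop_nhds_zero_nat.mul (hloglim.const_mul (1/2 : ℝ))
      simpa using this
    simpa using (tendsto_const_nhds.add h0)
  refine hmain.congr' ?_
  filter_upwards [eventually_gt_atTop 0] with n hn
  have hn0 : (n : ℝ) ≠ 0 := Nat.cast_ne_zero.mpr hn.ne'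
  have hsq : (lam⁻¹ ^ n * x) ^ 2 + (lam ^ n * y) ^ 2 = lam ^ (2 * n) * c n := by
    simp only [hc]
    have hl : lam ^ n * lam⁻¹ ^ n = 1 := by
      rw [← mul_pow, mul_inv_cancel₀ hlam0.ne', one_pow]
    linear_combination (-(lam⁻¹ ^ n) ^ 2 * x ^ 2 * (1 + lam ^ n * lam⁻¹ ^ n)) * hl
  rw [hsq, Real.log_sqrt (by positivity), Real.log_mul (by positivity) (hcpos n).ne',
    Real.log_pow]
  push_cast
  field_simp

theorem charge_growth_of_semistable
    -- `cl` is (induced by) a group homomorphism `K₀(D) → Γ`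
    (hcl : ∀ T : Triangle C, (T ∈ distTriang C) → cl T.obj₂ = cl T.obj₁ + cl T.obj₃)
    (σ : BridgelandStab C Γ cl) (Φ : C ≌ C) (lam : ℝ)
    (hΦ : IsDHKKPseudoAnosov σ Φ lam) :
    ∀ (φ : ℝ) (A : C), A ∈ σ.P φ → ¬ IsZero A →
      Filter.Tendsto
        (fun n : ℕ => (n : ℝ)⁻¹ *
          Real.log (‖σ.Z (cl ((Φ.functor.obj)^[n] A))‖))
        Filter.atTop (nhds (Real.log lam)) ∧
      ¬ Filter.Tendsto
        (fun n : ℕ => (n : ℝ)⁻¹ *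
          Real.log (‖σ.Z (cl ((Φ.functor.obj)^[n] A))‖))
        Filter.atTop (nhds (-(Real.log lam))) := by
  intro φ A hA hAnz
  obtain ⟨hlam, f, hfmono, hf1, hT, hP⟩ := hΦ
  have hlam0 : 0 < lam := lt_trans one_pos hlam
  obtain ⟨r, hr, hrZ⟩ := σ.ray φ A hA hAnz
  have hZA : σ.Z (cl A) ≠ 0 := by
    rw [hrZ]
    exact mul_ne_zero (by exact_mod_cast hr.ne') (Complex.exp_ne_zero _)
  set F : ℕ → C := fun n => (Φ.functor.obj)^[n] A with hF
  have hFsucc : ∀ n, F (n + 1) = Φ.functor.obj (F n) := fun n =>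
    Function.iterate_succ_apply' _ _ _
  have hmem : ∀ n, F n ∈ σ.P (f^[n] φ) := by
    intro n; induction n with
    | zero => simpa [hF] using hA
    | succ n ih =>
        rw [hFsucc, Function.iterate_succ_apply']
        exact (hP _ _).mpr ⟨F n, ih, ⟨Iso.refl _⟩⟩
  have hFnz : ∀ n, ¬ IsZero (F n) := by
    intro n; induction n with
    | zero => simpa [hF] using hAnz
    | succ n ih =>
        rw [hFsucc]
        intro h
        exact ih (IsZero.of_iso (Φ.inverse.map_isZero h) (Φ.unitIso.app (F n)))
  set x := (σ.Z (cl A)).re with hx'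
  set y := (σ.Z (cl A)).im with hy'
  have hxy : x ≠ 0 ∨ y ≠ 0 := by
    by_contra hcon
    push_neg at hcon
    exact hZA (Complex.ext (by simpa using hcon.1) (by simpa using hcon.2))
  obtain ⟨c, hc, ν, hν0, hνz, hνs, hνa, hsupp⟩ := σ.support
  obtain ⟨ε, hε, hεle⟩ := lattice_bound ν hν0 hνz hνs hνa
  rcases hT with hT | hT
  · -- contracting real part, expanding imaginary part
    have hre : ∀ n, (σ.Z (cl (F n))).re = lam⁻¹ ^ n * x := by
      intro n; induction n with
      | zero => simp [hF, hx']
      | succ n ih => rw [hFsucc, (hT (F n)).1, ih, pow_succ]; ring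
    have him : ∀ n, (σ.Z (cl (F n))).im = lam ^ n * y := by
      intro n; induction n with
      | zero => simp [hF, hy']
      | succ n ih => rw [hFsucc, (hT (F n)).2, ih, pow_succ]; ring
    have hy : y ≠ 0 := by
      intro hy0
      have hx : x ≠ 0 := hxy.resolve_right (by simp [hy0])
      have htend : Tendsto (fun n : ℕ => c * (lam⁻¹ ^ n * |x|)) atTop (nhds 0) := by
        have h2 := tendsto_pow_atTop_nhds_zero_of_lt_one (inv_pos.mpr hlam0).le
          (inv_lt_one_of_one_lt₀ hlam)
        simpa using (h2.mul_const |x|).const_mul c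
      have hev : ∀ᶠ n in atTop, c * (lam⁻¹ ^ n * |x|) < ε :=
        htend.eventually_lt_const hε
      obtain ⟨n, hn⟩ := hev.exists
      have hZn : σ.Z (cl (F n)) ≠ 0 := by
        intro h
        have h3 := hre n
        rw [h] at h3
        simp only [Complex.zero_re] at h3
        exact hx (by
          rcases mul_eq_zero.mp h3.symm with h4 | h4
          · exact absurd h4 (by positivity)
          · exact h4)
      have hcln : cl (F n) ≠ 0 := fun h => hZn (by rw [h]; exact map_zero _)
      have h1 := hεle _ hcln
      have h2 := hsupp _ _ (hmem n) (hFnz n)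
      have habsn : ‖σ.Z (cl (F n))‖ = lam⁻¹ ^ n * |x| := by
        rw [Complex.norm_def, Complex.normSq_apply, hre, him, hy0]
        have : lam⁻¹ ^ n * x * (lam⁻¹ ^ n * x) = (lam⁻¹ ^ n * x) ^ 2 := by ring
        rw [mul_zero, mul_zero, add_zero, this, Real.sqrt_sq_eq_abs, abs_mul,
          abs_of_pos (by positivity)]
      rw [habsn] at h2
      linarith
    have habs : ∀ n, Real.sqrt ((lam⁻¹ ^ n * x) ^ 2 + (lam ^ n * y) ^ 2)
        = ‖σ.Z (cl (F n))‖ := by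
      intro n
      rw [Complex.norm_def, Complex.normSq_apply, hre, him]
      congr 1
      ring
    have hlim := (aux_tendsto lam x y hlam hy).congr
      (fun n => by rw [habs n])
    refine ⟨hlim, fun hcon => ?_⟩
    have h5 := tendsto_nhds_unique hlim hcon
    have hpos := Real.log_pos hlam
    linarith
  · -- expanding real part, contracting imaginary part
    have hre : ∀ n, (σ.Z (cl (F n))).re = lam ^ n * x := by
      intro n; induction n with
      | zero => simp [hF, hx']
      | succ n ih => rw [hFsucc, (hT (F n)).1, ih, pow_succ]; ring
    have him : ∀ n, (σ.Z (cl (F n))).im = lam⁻¹ ^ n * y := by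
      intro n; induction n with
      | zero => simp [hF, hy']
      | succ n ih => rw [hFsucc, (hT (F n)).2, ih, pow_succ]; ring
    have hx : x ≠ 0 := by
      intro hx0
      have hy : y ≠ 0 := hxy.resolve_left (by simp [hx0])
      have htend : Tendsto (fun n : ℕ => c * (lam⁻¹ ^ n * |y|)) atTop (nhds 0) := by
        have h2 := tendsto_pow_atTop_nhds_zero_of_lt_one (inv_pos.mpr hlam0).le
          (inv_lt_one_of_one_lt₀ hlam)
        simpa using (h2.mul_const |y|).const_mul c
      have hev : ∀ᶠ n in atTop, c * (lam⁻¹ ^ n * |y|) < ε :=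
        htend.eventually_lt_const hε
      obtain ⟨n, hn⟩ := hev.exists
      have hZn : σ.Z (cl (F n)) ≠ 0 := by
        intro h
        have h3 := him n
        rw [h] at h3
        simp only [Complex.zero_im] at h3
        exact hy (by
          rcases mul_eq_zero.mp h3.symm with h4 | h4
          · exact absurd h4 (by positivity)
          · exact h4)
      have hcln : cl (F n) ≠ 0 := fun h => hZn (by rw [h]; exact map_zero _)
      have h1 := hεle _ hcln
      have h2 := hsupp _ _ (hmem n) (hFnz n)
      have habsn : ‖σ.Z (cl (F n))‖ = lam⁻¹ ^ n * |y| := by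
        rw [Complex.norm_def, Complex.normSq_apply, hre, him, hx0]
        have : lam⁻¹ ^ n * y * (lam⁻¹ ^ n * y) = (lam⁻¹ ^ n * y) ^ 2 := by ring
        rw [mul_zero, mul_zero, zero_add, this, Real.sqrt_sq_eq_abs, abs_mul,
          abs_of_pos (by positivity)]
      rw [habsn] at h2
      linarith
    have habs : ∀ n, Real.sqrt ((lam⁻¹ ^ n * y) ^ 2 + (lam ^ n * x) ^ 2)
        = ‖σ.Z (cl (F n))‖ := by
      intro n
      rw [Complex.norm_def, Complex.normSq_apply, hre, him]
      congr 1
      ring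
    have hlim := (aux_tendsto lam y x hlam hx).congr
      (fun n => by rw [habs n])
    refine ⟨hlim, fun hcon => ?_⟩
    have h5 := tendsto_nhds_unique hlim hcon
    have hpos := Real.log_pos hlam
    linarith


end
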